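/- For every c ∈ [-1,1], the surface x(s,t) = (2((1 - √(1-c²))e^{t/4} + (1 + √(1-c²))e^{-t/4})cos(s/4), 2((1 - √(1-c²))e^{t/4} + (1 + √(1-c²))e^{-t/4})sin(s/4), ct) satisfies the isothermal conditions ⟨x_s,x_s⟩ = ⟨x_t,x_t⟩ and ⟨x_s,x_t⟩ = 0. -/

import Mathlib

noncomputable section

def dot3 (a b : ℝ × ℝ × ℝ) : ℝ := a.1 * b.1 + a.2.1 * b.2.1 + a.2.2 * b.2.2

def cross3 (a b : ℝ × ℝ × ℝ) : ℝ × ℝ × ℝ :=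
  (a.2.1 * b.2.2 - a.2.2 * b.2.1, a.2.2 * b.1 - a.1 * b.2.2, a.1 * b.2.1 - a.2.1 * b.1)

def norm3 (a : ℝ × ℝ × ℝ) : ℝ := Real.sqrt (dot3 a a)

def pS (x : ℝ → ℝ → ℝ × ℝ × ℝ) (s t : ℝ) : ℝ × ℝ × ℝ := deriv (fun σ => x σ t) s

def pT (x : ℝ → ℝ → ℝ × ℝ × ℝ) (s t : ℝ) : ℝ × ℝ × ℝ := deriv (fun τ => x s τ) t
/-- The minimal surface family passing the circle. -/
def xfam (c : ℝ) (s t : ℝ) : ℝ × ℝ × ℝ :=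
  (2 * ((1 - Real.sqrt (1 - c ^ 2)) * Real.exp (t / 4)
      + (1 + Real.sqrt (1 - c ^ 2)) * Real.exp (-(t / 4))) * Real.cos (s / 4),
   2 * ((1 - Real.sqrt (1 - c ^ 2)) * Real.exp (t / 4)
      + (1 + Real.sqrt (1 - c ^ 2)) * Real.exp (-(t / 4))) * Real.sin (s / 4),
   c * t)

/-- The circle surface family satisfies the isothermal conditions. -/
theorem xfam_isothermal :
    ∀ c ∈ Set.Icc (-1 : ℝ) 1, ∀ s t,
      dot3 (pS (xfam c) s t) (pS (xfam c) s t) = dot3 (pT (xfam c) s t) (pT (xfam c) s t)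
      ∧ dot3 (pS (xfam c) s t) (pT (xfam c) s t) = 0 := by
  intro c hc s t
  have h1 : (0:ℝ) ≤ 1 - c ^ 2 := by nlinarith [hc.1, hc.2]
  set r := Real.sqrt (1 - c ^ 2) with hrdef
  have hr2 : r ^ 2 = 1 - c ^ 2 := Real.sq_sqrt h1
  set a : ℝ := 1 - r
  set b : ℝ := 1 + r
  set F : ℝ := 2 * (a * Real.exp (t / 4) + b * Real.exp (-(t / 4))) with hF
  -- s-derivative
  have hid_s : HasDerivAt (fun σ : ℝ => σ / 4) (1 / 4) s := (hasDerivAt_id s).div_const 4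
  have hcos : HasDerivAt (fun σ : ℝ => Real.cos (σ / 4)) (-Real.sin (s / 4) * (1 / 4)) s :=
    (Real.hasDerivAt_cos (s / 4)).comp (h₂ := Real.cos) (h := fun σ : ℝ => σ / 4) s hid_s
  have hsin : HasDerivAt (fun σ : ℝ => Real.sin (σ / 4)) (Real.cos (s / 4) * (1 / 4)) s :=
    (Real.hasDerivAt_sin (s / 4)).comp (h₂ := Real.sin) (h := fun σ : ℝ => σ / 4) s hid_s
  have hS : pS (xfam c) s t
      = (F * (-Real.sin (s / 4) * (1 / 4)), F * (Real.cos (s / 4) * (1 / 4)), 0) := by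
    have h := ((hcos.const_mul F).prodMk ((hsin.const_mul F).prodMk (hasDerivAt_const s (c * t))))
    have h2 : HasDerivAt (fun σ => xfam c σ t)
        (F * (-Real.sin (s / 4) * (1 / 4)), F * (Real.cos (s / 4) * (1 / 4)), 0) s := by
      simpa [xfam, hF, mul_comm, mul_assoc, mul_left_comm] using h
    exact h2.deriv
  -- t-derivative
  have hid_t : HasDerivAt (fun τ : ℝ => τ / 4) (1 / 4) t := (hasDerivAt_id t).div_const 4
  have hexp : HasDerivAt (fun τ : ℝ => Real.exp (τ / 4)) (Real.exp (t / 4) * (1 / 4)) t :=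
    (Real.hasDerivAt_exp (t / 4)).comp (h₂ := Real.exp) (h := fun τ : ℝ => τ / 4) t hid_t
  have hexpn : HasDerivAt (fun τ : ℝ => Real.exp (-(τ / 4)))
      (Real.exp (-(t / 4)) * (-(1 / 4))) t :=
    (Real.hasDerivAt_exp (-(t / 4))).comp (h₂ := Real.exp) (h := fun τ : ℝ => -(τ / 4)) t hid_t.neg
  set G : ℝ := 2 * (a * (Real.exp (t / 4) * (1 / 4)) + b * (Real.exp (-(t / 4)) * (-(1 / 4)))) with hG
  have hGder : HasDerivAt (fun τ : ℝ =>
      2 * (a * Real.exp (τ / 4) + b * Real.exp (-(τ / 4)))) G t := by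
    simpa [hG] using (((hexp.const_mul a).add (hexpn.const_mul b)).const_mul 2)
  have hT : pT (xfam c) s t = (G * Real.cos (s / 4), G * Real.sin (s / 4), c) := by
    have h := ((hGder.mul_const (Real.cos (s / 4))).prodMk
      ((hGder.mul_const (Real.sin (s / 4))).prodMk
        (((hasDerivAt_id t).const_mul c)))).deriv
    simpa [xfam, pT, mul_comm] using h
  rw [hS, hT]
  have hsc : Real.sin (s / 4) ^ 2 + Real.cos (s / 4) ^ 2 = 1 := Real.sin_sq_add_cos_sq _
  have hee : Real.exp (t / 4) * Real.exp (-(t / 4)) = 1 := by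
    rw [← Real.exp_add]; simp
  constructor
  · show F * (-Real.sin (s / 4) * (1 / 4)) * (F * (-Real.sin (s / 4) * (1 / 4)))
      + F * (Real.cos (s / 4) * (1 / 4)) * (F * (Real.cos (s / 4) * (1 / 4))) + 0 * 0
      = G * Real.cos (s / 4) * (G * Real.cos (s / 4))
      + G * Real.sin (s / 4) * (G * Real.sin (s / 4)) + c * c
    have key : F ^ 2 * (1 / 16) = G ^ 2 + c ^ 2 := by
      have hab : a * b = c ^ 2 := by simp only [a, b]; nlinarith [hr2]
      simp only [hF, hG]
      nlinarith [hee, hab]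
    nlinarith [hsc, key]
  · show F * (-Real.sin (s / 4) * (1 / 4)) * (G * Real.cos (s / 4))
      + F * (Real.cos (s / 4) * (1 / 4)) * (G * Real.sin (s / 4)) + 0 * c = 0
    ring
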